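/- Let $E$ be a real Banach space, $\varphi : E \to [0, \infty]$ proper convex, and for each $\lambda \ge 0$ let $u_\lambda, g_\lambda, h_\lambda$ satisfy $g_\lambda \in \partial\varphi(u_\lambda)$ and $h_\lambda + (1+\lambda) g_\lambda = w^*$ for a fixed $w^* \in E^*$, where $h_\lambda$ is monotone in the sense that $\langle h_\lambda - h_\nu, u_\lambda - u_\nu \rangle \ge 0$ for all $\lambda, \nu \ge 0$. Then $\lambda \mapsto \varphi(u_\lambda)$ is non-increasing: if $0 \le \lambda \le \nu$ then $\varphi(u_\nu) \le \varphi(u_\lambda)$. -/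
import Mathlib


open scoped ENNReal

private lemma aux_toReal {A B : ℝ≥0∞} (hA : A ≠ ⊤) (hB : B ≠ ⊤) {a : ℝ}
    (hle : A + ENNReal.ofReal a ≤ B + ENNReal.ofReal (-a)) :
    A.toReal ≤ B.toReal - a := by
  have h1 : (A + ENNReal.ofReal a).toReal ≤ (B + ENNReal.ofReal (-a)).toReal :=
    ENNReal.toReal_mono (by finiteness) hle
  rw [ENNReal.toReal_add hA ENNReal.ofReal_ne_top,
    ENNReal.toReal_add hB ENNReal.ofReal_ne_top, ENNReal.toReal_ofReal',
    ENNReal.toReal_ofReal'] at h1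
  rcases le_total a 0 with h | h
  · simp [max_eq_right h, max_eq_left (neg_nonneg.mpr h)] at h1; linarith
  · simp [max_eq_left h, max_eq_right (neg_nonpos.mpr h)] at h1; linarith

/-- Monotonicity in `λ` of `φ(u_λ)` for solutions of
`h_λ + (1+λ) g_λ = w*`, `g_λ ∈ ∂φ(u_λ)`, when `λ ↦ h_λ` is monotone along `λ ↦ u_λ`.
The subgradient inequality is encoded as `φ(u_λ) + ⟨g_λ,v-u_λ⟩⁺ ≤ φ(v) + ⟨g_λ,v-u_λ⟩⁻`. -/
theorem stmt8 {E : Type*} [NormedAddCommGroup E] [NormedSpace ℝ E] [CompleteSpace E]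
    (φ : E → ℝ≥0∞)
    (hproper : ∃ u, φ u ≠ ⊤)
    (hconv : ∀ u v : E, ∀ τ : ℝ, 0 ≤ τ → τ ≤ 1 →
      φ (τ • u + (1 - τ) • v) ≤ ENNReal.ofReal τ * φ u + ENNReal.ofReal (1 - τ) * φ v)
    (wstar : E →L[ℝ] ℝ) (u : ℝ → E) (g h : ℝ → (E →L[ℝ] ℝ))
    (hsub : ∀ lam : ℝ, 0 ≤ lam → ∀ v : E,
      φ (u lam) + ENNReal.ofReal ((g lam) (v - u lam)) ≤
        φ v + ENNReal.ofReal (-((g lam) (v - u lam))))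
    (heq : ∀ lam : ℝ, 0 ≤ lam → h lam + (1 + lam) • g lam = wstar)
    (hmono : ∀ lam nu : ℝ, 0 ≤ lam → 0 ≤ nu → 0 ≤ (h lam - h nu) (u lam - u nu)) :
    ∀ lam nu : ℝ, 0 ≤ lam → lam ≤ nu → φ (u nu) ≤ φ (u lam) := by
  obtain ⟨u0, hu0⟩ := hproper
  have hfin : ∀ μ : ℝ, 0 ≤ μ → φ (u μ) ≠ ⊤ := by
    intro μ hμ
    have h1 := hsub μ hμ u0
    have h2 : φ (u μ) ≤ φ u0 + ENNReal.ofReal (-((g μ) (u0 - u μ))) :=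
      le_trans le_self_add h1
    exact ne_top_of_le_ne_top (by finiteness) h2
  intro lam nu hlam hlamnu
  rcases eq_or_lt_of_le hlamnu with rfl | hlt
  · exact le_rfl
  have hnu : (0:ℝ) ≤ nu := hlam.trans hlamnu
  set a : ℝ := (g lam) (u nu - u lam) with ha
  set b : ℝ := (g nu) (u lam - u nu) with hb
  have h1 : (φ (u lam)).toReal ≤ (φ (u nu)).toReal - a :=
    aux_toReal (hfin lam hlam) (hfin nu hnu) (hsub lam hlam (u nu))
  have h2 : (φ (u nu)).toReal ≤ (φ (u lam)).toReal - b :=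
    aux_toReal (hfin nu hnu) (hfin lam hlam) (hsub nu hnu (u lam))
  -- monotonicity gives (1+nu)*b + (1+lam)*a ≥ 0
  have hhl : h lam = wstar - (1 + lam) • g lam := by
    have := heq lam hlam; rw [← this]; abel
  have hhn : h nu = wstar - (1 + nu) • g nu := by
    have := heq nu hnu; rw [← this]; abel
  have hm := hmono lam nu hlam hnu
  rw [hhl, hhn] at hm
  have hm' : 0 ≤ (1 + nu) * b + (1 + lam) * a := by
    have : ((wstar - (1 + lam) • g lam) - (wstar - (1 + nu) • g nu)) (u lam - u nu)
        = (1 + nu) * b - (1 + lam) * ((g lam) (u lam - u nu)) := by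
      simp [hb, ContinuousLinearMap.sub_apply, ContinuousLinearMap.smul_apply]
    rw [this] at hm
    have : (g lam) (u lam - u nu) = -a := by
      rw [ha, ← map_neg]; congr 1; abel
    rw [this] at hm; linarith
  have hab : a + b ≤ 0 := by linarith
  have hbnn : 0 ≤ b := by nlinarith
  have : (φ (u nu)).toReal ≤ (φ (u lam)).toReal := by linarith
  exact (ENNReal.toReal_le_toReal (hfin nu hnu) (hfin lam hlam)).mp this
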